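/- Let U be an (n+1)×(n+1) complex matrix that is tridiagonal except for possibly nonzero corner entries u_{1,n+1} and u_{n+1,1}. Then det(U) = det(T) - u_{1,n+1}·u_{n+1,1}·det(T') + (-1)^n·u_{n+1,1}·u_{1,2}·u_{2,3}···u_{n,n+1} + (-1)^n·u_{1,n+1}·u_{2,1}·u_{3,2}···u_{n+1,n}, where T is the tridiagonal matrix obtained from U by setting the corner entries to zero, and T' is the tridiagonal submatrix of U obtained by deleting the first and last rows and columns. -/

import Mathlib

open Matrix

private lemma myUpdateRow_comm {R : Type*} {k : ℕ} (A : Matrix (Fin k) (Fin k) R)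
    {i j : Fin k} (hij : i ≠ j) (r s : Fin k → R) :
    updateRow (updateRow A i r) j s = updateRow (updateRow A j s) i r := by
  ext a b
  rcases eq_or_ne a i with rfl | hai
  · rw [updateRow_apply, if_neg hij, updateRow_self, updateRow_self]
  · rcases eq_or_ne a j with rfl | haj
    · rw [updateRow_self, updateRow_apply, if_neg hij.symm, updateRow_self]
    · simp [updateRow_apply, hai, haj]

private lemma auxA (m : ℕ) (T : Matrix (Fin (m + 3)) (Fin (m + 3)) ℂ)
    (h : ∀ i j : Fin (m + 3), ((i : ℕ) + 2 ≤ (j : ℕ) ∨ (j : ℕ) + 2 ≤ (i : ℕ)) → T i j = 0) :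
    (updateRow T 0 (Pi.single (Fin.last (m + 2)) 1)).det
      = (-1) ^ (m + 2) * ∏ j : Fin (m + 2), T j.succ j.castSucc := by
  rw [det_succ_row_zero, Finset.sum_eq_single (Fin.last (m + 2))]
  · have hsub : (updateRow T 0 (Pi.single (Fin.last (m + 2)) 1)).submatrix Fin.succ
        (Fin.last (m + 2)).succAbove = T.submatrix Fin.succ Fin.castSucc := by
      ext i j
      simp [updateRow_apply, Fin.succ_ne_zero]
    rw [hsub, updateRow_self, Pi.single_eq_same]
    have htriang : (T.submatrix Fin.succ Fin.castSucc).BlockTriangular id := by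
      intro i j hij
      have hlt : (j : ℕ) < (i : ℕ) := hij
      exact h _ _ (Or.inr (by simp only [Fin.coe_castSucc, Fin.val_succ]; omega))
    rw [det_of_upperTriangular htriang]
    simp [Fin.val_last]
  · intro b _ hb
    rw [updateRow_self, Pi.single_apply, if_neg hb, mul_zero, zero_mul]
  · intro hmem
    exact absurd (Finset.mem_univ _) hmem

private lemma auxB (m : ℕ) (T : Matrix (Fin (m + 3)) (Fin (m + 3)) ℂ)
    (h : ∀ i j : Fin (m + 3), ((i : ℕ) + 2 ≤ (j : ℕ) ∨ (j : ℕ) + 2 ≤ (i : ℕ)) → T i j = 0) :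
    (updateRow T (Fin.last (m + 2)) (Pi.single 0 1)).det
      = (-1) ^ (m + 2) * ∏ j : Fin (m + 2), T j.castSucc j.succ := by
  rw [det_succ_row _ (Fin.last (m + 2)), Finset.sum_eq_single (0 : Fin (m + 3))]
  · have hsub : (updateRow T (Fin.last (m + 2)) (Pi.single 0 1)).submatrix
        (Fin.last (m + 2)).succAbove (0 : Fin (m + 3)).succAbove
        = T.submatrix Fin.castSucc Fin.succ := by
      ext i j
      simp [updateRow_apply, (Fin.castSucc_lt_last i).ne]
    rw [hsub, updateRow_self, Pi.single_eq_same]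
    have htriang : (T.submatrix Fin.castSucc Fin.succ).BlockTriangular OrderDual.toDual := by
      intro i j hij
      have : (i : ℕ) < (j : ℕ) := hij
      exact h _ _ (Or.inl (by simp only [Fin.coe_castSucc, Fin.val_succ]; omega))
    rw [det_of_lowerTriangular _ htriang]
    simp [Fin.val_last]
  · intro b _ hb
    rw [updateRow_self, Pi.single_apply, if_neg hb, mul_zero, zero_mul]
  · intro hmem
    exact absurd (Finset.mem_univ _) hmem

private lemma auxC (m : ℕ) (T : Matrix (Fin (m + 3)) (Fin (m + 3)) ℂ) :
    (updateRow (updateRow T (Fin.last (m + 2)) (Pi.single 0 1)) 0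
        (Pi.single (Fin.last (m + 2)) 1)).det
      = - (Matrix.of fun i j : Fin (m + 1) => T i.succ.castSucc j.succ.castSucc).det := by
  rw [det_succ_row_zero, Finset.sum_eq_single (Fin.last (m + 2))]
  · rw [updateRow_self, Pi.single_eq_same]
    set N := (updateRow (updateRow T (Fin.last (m + 2)) (Pi.single 0 1)) 0
        (Pi.single (Fin.last (m + 2)) 1)).submatrix Fin.succ (Fin.last (m + 2)).succAbove
      with hN
    have hNlast : ∀ j : Fin (m + 2), N (Fin.last (m + 1)) j = (Pi.single (0 : Fin (m + 3)) (1 : ℂ) : Fin (m + 3) → ℂ) j.castSucc := by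
      intro j
      simp [hN, updateRow_apply, Fin.succ_ne_zero, Fin.succ_last]
    rw [det_succ_row N (Fin.last (m + 1)), Finset.sum_eq_single (0 : Fin (m + 2))]
    · rw [hNlast, Fin.castSucc_zero, Pi.single_eq_same]
      have hsub : N.submatrix (Fin.last (m + 1)).succAbove (0 : Fin (m + 2)).succAbove
          = Matrix.of fun i j : Fin (m + 1) => T i.succ.castSucc j.succ.castSucc := by
        ext i j
        have hi := i.isLt
        have h2 : (i.castSucc.succ : Fin (m + 3)) ≠ Fin.last (m + 2) := by
          simp only [ne_eq, Fin.ext_iff, Fin.val_succ, Fin.coe_castSucc, Fin.val_last]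
          omega
        simp only [hN, submatrix_apply, Fin.succAbove_last, Fin.succAbove_zero]
        rw [updateRow_apply, if_neg (Fin.succ_ne_zero _), updateRow_apply, if_neg h2]
        simp [-Fin.castSucc_succ, Fin.succ_castSucc]
      rw [hsub]
      simp only [Fin.val_last, Fin.val_zero, add_zero, mul_one, one_mul, ← mul_assoc, ← pow_add]
      rw [show m + 2 + (m + 1) = 2 * (m + 1) + 1 from by ring, pow_succ, pow_mul, neg_one_sq,
        one_pow, one_mul, neg_one_mul]
    · intro b _ hb
      rw [hNlast, Pi.single_apply, if_neg (by simpa using hb), mul_zero, zero_mul]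
    · intro hmem
      exact absurd (Finset.mem_univ _) hmem
  · intro b _ hb
    rw [updateRow_self, Pi.single_apply, if_neg hb, mul_zero, zero_mul]
  · intro hmem
    exact absurd (Finset.mem_univ _) hmem

/-- Lemma 1.2: determinant of an "almost tridiagonal" matrix (tridiagonal except for
the two corner entries `u 0 (Fin.last n)` and `u (Fin.last n) 0`). -/
theorem stmt_0 (n : ℕ) (hn : 2 ≤ n) (u : Matrix (Fin (n + 1)) (Fin (n + 1)) ℂ)
    (htri : ∀ i j : Fin (n + 1), ((i : ℕ) + 2 ≤ (j : ℕ) ∨ (j : ℕ) + 2 ≤ (i : ℕ)) →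
      ¬((i = 0 ∧ j = Fin.last n) ∨ (i = Fin.last n ∧ j = 0)) → u i j = 0) :
    u.det =
      (Matrix.of fun i j : Fin (n + 1) =>
          if (i = 0 ∧ j = Fin.last n) ∨ (i = Fin.last n ∧ j = 0) then 0 else u i j).det
        - u 0 (Fin.last n) * u (Fin.last n) 0 *
          (Matrix.of fun i j : Fin (n - 1) =>
            u ⟨(i : ℕ) + 1, by have := i.2; omega⟩ ⟨(j : ℕ) + 1, by have := j.2; omega⟩).det
        + (-1) ^ n * u (Fin.last n) 0 * ∏ j : Fin n, u j.castSucc j.succ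
        + (-1) ^ n * u 0 (Fin.last n) * ∏ j : Fin n, u j.succ j.castSucc := by
  obtain ⟨m, rfl⟩ : ∃ m, n = m + 2 := ⟨n - 2, by omega⟩
  set T : Matrix (Fin (m + 3)) (Fin (m + 3)) ℂ :=
    Matrix.of fun i j : Fin (m + 3) =>
      if (i = 0 ∧ j = Fin.last (m + 2)) ∨ (i = Fin.last (m + 2) ∧ j = 0) then 0 else u i j
    with hTdef
  have hT : ∀ i j : Fin (m + 3), ((i : ℕ) + 2 ≤ (j : ℕ) ∨ (j : ℕ) + 2 ≤ (i : ℕ)) →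
      T i j = 0 := by
    intro i j hij
    by_cases hc : (i = 0 ∧ j = Fin.last (m + 2)) ∨ (i = Fin.last (m + 2) ∧ j = 0)
    · simp [hTdef, hc]
    · simpa [hTdef, hc] using htri i j hij hc
  have h0l : (0 : Fin (m + 3)) ≠ Fin.last (m + 2) := by
    simp [Fin.ext_iff]
  -- u is T with row 0 and row last updated
  have hu : u = updateRow (updateRow T 0 (u 0)) (Fin.last (m + 2)) (u (Fin.last (m + 2))) := by
    ext i j
    rcases eq_or_ne i (Fin.last (m + 2)) with rfl | hil
    · rw [updateRow_self]
    · rw [updateRow_apply, if_neg hil, updateRow_apply]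
      rcases eq_or_ne i 0 with rfl | hi0
      · rw [if_pos rfl]
      · rw [if_neg hi0]
        simp [hTdef, hi0, hil]
  have hrow0 : u 0 = T 0 + u 0 (Fin.last (m + 2)) • (Pi.single (Fin.last (m + 2)) (1 : ℂ) : Fin (m + 3) → ℂ) := by
    funext j
    rcases eq_or_ne j (Fin.last (m + 2)) with rfl | hj
    · simp [hTdef]
    · simp [hTdef, hj, h0l.symm, Pi.single_apply]
  have hrowl : u (Fin.last (m + 2)) = T (Fin.last (m + 2)) +
      u (Fin.last (m + 2)) 0 • (Pi.single (0 : Fin (m + 3)) (1 : ℂ) : Fin (m + 3) → ℂ) := by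
    funext j
    rcases eq_or_ne j 0 with rfl | hj
    · simp [hTdef, h0l.symm]
    · simp [hTdef, hj, h0l, Pi.single_apply]
  set a := u 0 (Fin.last (m + 2)) with ha
  set b := u (Fin.last (m + 2)) 0 with hb
  -- split the determinant
  have step1 : u.det = (updateRow T 0 (u 0)).det +
      b * (updateRow (updateRow T 0 (u 0)) (Fin.last (m + 2)) (Pi.single 0 1)).det := by
    conv_lhs => rw [hu, hrowl]
    rw [det_updateRow_add, det_updateRow_smul,
      show T (Fin.last (m + 2)) = (updateRow T 0 (u 0)) (Fin.last (m + 2)) from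
        (updateRow_ne h0l.symm).symm,
      updateRow_eq_self]
  have step2 : (updateRow T 0 (u 0)).det = T.det +
      a * (updateRow T 0 (Pi.single (Fin.last (m + 2)) 1)).det := by
    conv_lhs => rw [hrow0]
    rw [det_updateRow_add, det_updateRow_smul, updateRow_eq_self]
  have step3 : (updateRow (updateRow T 0 (u 0)) (Fin.last (m + 2)) (Pi.single 0 1)).det =
      (updateRow T (Fin.last (m + 2)) (Pi.single 0 1)).det +
      a * (updateRow (updateRow T (Fin.last (m + 2)) (Pi.single 0 1)) 0
        (Pi.single (Fin.last (m + 2)) 1)).det := by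
    rw [myUpdateRow_comm _ h0l, hrow0, det_updateRow_add, det_updateRow_smul,
      show T 0 = (updateRow T (Fin.last (m + 2)) (Pi.single 0 1)) 0 from
        (updateRow_ne h0l).symm,
      updateRow_eq_self]
  rw [step1, step2, step3, auxA m T hT, auxB m T hT, auxC m T]
  -- now identify products and the small determinant with entries of u
  have hprod1 : ∀ j : Fin (m + 2), T j.succ j.castSucc = u j.succ j.castSucc := by
    intro j
    have h1 : (j.succ : Fin (m + 3)) ≠ 0 := Fin.succ_ne_zero j
    have h2 : ¬((j.succ : Fin (m + 3)) = Fin.last (m + 2) ∧ (j.castSucc : Fin (m + 3)) = 0) := by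
      rintro ⟨hx, hy⟩
      have : (j : ℕ) + 1 = m + 2 := by simpa [Fin.ext_iff] using hx
      have : (j : ℕ) = 0 := by
        rw [Fin.ext_iff, Fin.coe_castSucc, Fin.val_zero] at hy; exact hy
      omega
    simp only [hTdef, Matrix.of_apply]
    rw [if_neg (by rintro (⟨hx, _⟩ | hc); exact h1 hx; exact h2 hc)]
  have hprod2 : ∀ j : Fin (m + 2), T j.castSucc j.succ = u j.castSucc j.succ := by
    intro j
    have h2 : ¬((j.castSucc : Fin (m + 3)) = 0 ∧ (j.succ : Fin (m + 3)) = Fin.last (m + 2)) := by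
      rintro ⟨hy, hx⟩
      have : (j : ℕ) + 1 = m + 2 := by simpa [Fin.ext_iff] using hx
      have : (j : ℕ) = 0 := by
        rw [Fin.ext_iff, Fin.coe_castSucc, Fin.val_zero] at hy; exact hy
      omega
    have h1 : (j.castSucc : Fin (m + 3)) ≠ Fin.last (m + 2) := by
      simp [Fin.ext_iff]
      omega
    simp only [hTdef, Matrix.of_apply]
    rw [if_neg (by rintro (hc | ⟨hx, _⟩); exact h2 hc; exact h1 hx)]
  have hmid : (Matrix.of fun i j : Fin (m + 1) => T i.succ.castSucc j.succ.castSucc) =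
      (Matrix.of fun i j : Fin (m + 2 - 1) =>
        u ⟨(i : ℕ) + 1, by have := i.2; omega⟩ ⟨(j : ℕ) + 1, by have := j.2; omega⟩) := by
    ext i j
    have h1 : (i.succ.castSucc : Fin (m + 3)) ≠ 0 := by
      rw [ne_eq, Fin.ext_iff, Fin.coe_castSucc, Fin.val_succ, Fin.val_zero]; omega
    have h2 : (i.succ.castSucc : Fin (m + 3)) ≠ Fin.last (m + 2) := by
      simp [Fin.ext_iff]
      have := i.2
      omega
    simp only [Matrix.of_apply, hTdef]
    rw [if_neg (by rintro (⟨hx, _⟩ | ⟨hx, _⟩); exact h1 hx; exact h2 hx)]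
    congr 1 <;> simp [Fin.ext_iff]
  rw [Finset.prod_congr rfl fun j _ => hprod1 j, Finset.prod_congr rfl fun j _ => hprod2 j, hmid]
  generalize hD : (Matrix.of fun i j : Fin (m + 2 - 1) =>
            u ⟨(i : ℕ) + 1, by have := i.2; omega⟩ ⟨(j : ℕ) + 1, by have := j.2; omega⟩).det = D
  ring
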